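/- Let C be a first-order clause without equality that is blocked by some literal L in the formula F (every L-resolvent of C with a clause of F \ {C} is valid). Then C is redundant with respect to F: F \ {C} is satisfiable if and only if F ∪ {C} is satisfiable. -/

import Mathlib

/-- First-order terms over variables `V` and function symbols `Fn`. -/
inductive Term (V Fn : Type) : Type
  | var : V → Term V Fn
  | app : Fn → List (Term V Fn) → Term V Fn

/-- A substitution maps variables to terms. -/
abbrev Subst (V Fn : Type) := V → Term V Fn

/-- Applying a substitution to a term. -/
def Term.subst {V Fn : Type} (σ : Subst V Fn) : Term V Fn → Term V Fn
  | .var v => σ v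
  | .app f ts => .app f (ts.attach.map (fun t => Term.subst σ t.1))
  decreasing_by have := List.sizeOf_lt_of_mem t.2; simp at *; omega

/-- The set of variables occurring in a term. -/
def Term.vars {V Fn : Type} : Term V Fn → Set V
  | .var v => {v}
  | .app _ ts => {x | ∃ t ∈ ts.attach, x ∈ Term.vars t.1}
  decreasing_by have := List.sizeOf_lt_of_mem t.2; simp at *; omega

/-- A term is ground if it contains no variables. -/
def Term.IsGround {V Fn : Type} (t : Term V Fn) : Prop := t.vars = ∅

/-- Composition of substitutions: `σ.comp γ` is "first σ, then γ". -/
def Subst.comp {V Fn : Type} (σ γ : Subst V Fn) : Subst V Fn :=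
  fun v => (σ v).subst γ

/-- An atom: a predicate symbol applied to a list of argument terms. -/
structure Atom (V Fn P : Type) where
  pred : P
  args : List (Term V Fn)

/-- A literal: an atom with a polarity (`true` = positive). -/
structure Lit (V Fn P : Type) where
  pol : Bool
  atom : Atom V Fn P

/-- The complement of a literal. -/
def Lit.compl {V Fn P : Type} (l : Lit V Fn P) : Lit V Fn P := ⟨!l.pol, l.atom⟩

def Atom.subst {V Fn P : Type} (σ : Subst V Fn) (A : Atom V Fn P) : Atom V Fn P :=
  ⟨A.pred, A.args.map (Term.subst σ)⟩

def Lit.subst {V Fn P : Type} (σ : Subst V Fn) (l : Lit V Fn P) : Lit V Fn P :=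
  ⟨l.pol, l.atom.subst σ⟩

/-- A clause is a multiset (disjunction) of literals. -/
abbrev Clause (V Fn P : Type) := Multiset (Lit V Fn P)

def Clause.subst {V Fn P : Type} (σ : Subst V Fn) (C : Clause V Fn P) : Clause V Fn P :=
  C.map (Lit.subst σ)

def Atom.vars {V Fn P : Type} (A : Atom V Fn P) : Set V := {x | ∃ t ∈ A.args, x ∈ t.vars}
def Lit.vars {V Fn P : Type} (l : Lit V Fn P) : Set V := l.atom.vars
def Clause.vars {V Fn P : Type} (C : Clause V Fn P) : Set V := {x | ∃ l ∈ C, x ∈ l.vars}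

/-- A clause is ground if it contains no variables. -/
def Clause.IsGround {V Fn P : Type} (C : Clause V Fn P) : Prop := C.vars = ∅

/-- A substitution `σ` unifies a list of literals if it maps them all to the same literal. -/
def IsUnifier {V Fn P : Type} (σ : Subst V Fn) (ls : List (Lit V Fn P)) : Prop :=
  ∀ l₁ ∈ ls, ∀ l₂ ∈ ls, l₁.subst σ = l₂.subst σ

/-- A most general unifier: every unifier factors through it. -/
def IsMGU {V Fn P : Type} (σ : Subst V Fn) (ls : List (Lit V Fn P)) : Prop :=
  IsUnifier σ ls ∧ ∀ τ, IsUnifier τ ls → ∃ γ, σ.comp γ = τ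

/-- Validity of an equality-free clause: it contains a complementary pair of literals. -/
def Clause.ValidEF {V Fn P : Type} (C : Clause V Fn P) : Prop :=
  ∃ A : Atom V Fn P, (⟨true, A⟩ : Lit V Fn P) ∈ C ∧ (⟨false, A⟩ : Lit V Fn P) ∈ C

/-- `C` (written as `L ∨ C'`) is blocked by `L` in `F`: all `L`-resolvents with clauses
of `F \ {L ∨ C'}` are valid. -/
def BlockedEF {V Fn P : Type} (L : Lit V Fn P) (C' : Clause V Fn P)
    (F : Set (Clause V Fn P)) : Prop :=
  ∀ D ∈ F, D ≠ L ::ₘ C' → ∀ Ns Drest : Clause V Fn P, Ns + Drest = D → Ns ≠ 0 →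
    ∀ σ : Subst V Fn, IsMGU σ (L :: (Ns.map Lit.compl).toList) →
      Clause.ValidEF (C'.subst σ + Drest.subst σ)

/-- A propositional assignment on (ground) atoms. -/
abbrev PAssign (V Fn P : Type) := Atom V Fn P → Bool

def litTrue {V Fn P : Type} (α : PAssign V Fn P) (l : Lit V Fn P) : Prop :=
  α l.atom = l.pol

/-- Propositional satisfaction of a (ground) clause. -/
def satC {V Fn P : Type} (α : PAssign V Fn P) (C : Clause V Fn P) : Prop :=
  ∃ l ∈ C, litTrue α l

/-- A first-order interpretation. -/
structure Interp (Fn P : Type) : Type 1 where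
  dom : Type
  nonempty : Nonempty dom
  fn : Fn → List dom → dom
  pr : P → List dom → Prop

def Term.eval {V Fn P : Type} (I : Interp Fn P) (ρ : V → I.dom) : Term V Fn → I.dom
  | .var v => ρ v
  | .app f ts => I.fn f (ts.attach.map (fun t => Term.eval I ρ t.1))
  decreasing_by have := List.sizeOf_lt_of_mem t.2; simp at *; omega

def litHolds {V Fn P : Type} (I : Interp Fn P) (ρ : V → I.dom) (l : Lit V Fn P) : Prop :=
  l.pol = true ↔ I.pr l.atom.pred (l.atom.args.map (Term.eval I ρ))

def clauseHolds {V Fn P : Type} (I : Interp Fn P) (ρ : V → I.dom) (C : Clause V Fn P) : Prop :=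
  ∃ l ∈ C, litHolds I ρ l

/-- First-order satisfiability of a CNF formula (clauses implicitly universally quantified). -/
def SatEF {V Fn P : Type} (F : Set (Clause V Fn P)) : Prop :=
  ∃ I : Interp Fn P, ∀ C ∈ F, ∀ ρ : V → I.dom, clauseHolds I ρ C


-- test basic lemmas
section
variable {V Fn P : Type}

lemma List.attach_map_f {α β : Type*} (l : List α) (f : α → β) :
    (l.attach.map fun t => f t.1) = l.map f := by
  simp

@[simp] lemma Term.subst_var (σ : Subst V Fn) (v : V) :
    (Term.var v).subst σ = σ v := by rw [Term.subst]

@[simp] lemma Term.subst_app (σ : Subst V Fn) (f : Fn) (ts : List (Term V Fn)) :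
    (Term.app f ts).subst σ = .app f (ts.map (Term.subst σ)) := by
  rw [Term.subst]; simp

@[simp] lemma Term.vars_var (v : V) : (Term.var v : Term V Fn).vars = {v} := by rw [Term.vars]

lemma Term.vars_app (f : Fn) (ts : List (Term V Fn)) :
    (Term.app f ts).vars = {x | ∃ t ∈ ts, x ∈ Term.vars t} := by
  rw [Term.vars]; ext x; simp

lemma Term.ind' {motive : Term V Fn → Prop}
    (hv : ∀ v, motive (.var v))
    (ha : ∀ f ts, (∀ t ∈ ts, motive t) → motive (.app f ts)) : ∀ t, motive t := by
  have H : ∀ (n : ℕ) (t : Term V Fn), sizeOf t ≤ n → motive t := by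
    intro n
    induction n with
    | zero => intro t ht; cases t <;> simp at ht
    | succ n ih =>
      intro t ht
      cases t with
      | var v => exact hv v
      | app f ts =>
        refine ha f ts fun u hu => ih u ?_
        have := List.sizeOf_lt_of_mem hu
        simp at ht ⊢
        omega
  exact fun t => H (sizeOf t) t le_rfl
end
section
variable {V Fn P : Type}

lemma Term.subst_subst (σ δ : Subst V Fn) (t : Term V Fn) :
    (t.subst σ).subst δ = t.subst (σ.comp δ) := by
  induction t using Term.ind' with
  | hv v => simp [Subst.comp]
  | ha f ts ih => simp only [Term.subst_app, List.map_map]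
                  congr 1
                  exact List.map_congr_left fun t ht => ih t ht

lemma Subst.comp_assoc (a b c : Subst V Fn) : (a.comp b).comp c = a.comp (b.comp c) := by
  funext v; simp [Subst.comp, Term.subst_subst]

lemma Term.subst_congr {σ τ : Subst V Fn} {t : Term V Fn}
    (h : ∀ v ∈ t.vars, σ v = τ v) : t.subst σ = t.subst τ := by
  induction t using Term.ind' with
  | hv v => simpa using h v (by simp)
  | ha f ts ih =>
    simp only [Term.subst_app]
    congr 1
    refine List.map_congr_left fun u hu => ih u hu fun v hv => h v ?_
    rw [Term.vars_app]; exact ⟨u, hu, hv⟩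

@[simp] lemma Term.subst_id (t : Term V Fn) : t.subst Term.var = t := by
  induction t using Term.ind' with
  | hv v => simp
  | ha f ts ih => simp only [Term.subst_app]; rw [List.map_congr_left ih, List.map_id']

lemma Term.vars_finite (t : Term V Fn) : t.vars.Finite := by
  induction t using Term.ind' with
  | hv v => simp
  | ha f ts ih =>
    rw [Term.vars_app]
    have : {x | ∃ t ∈ ts, x ∈ Term.vars t} = ⋃ t ∈ ts, Term.vars t := by
      ext x; simp
    rw [this]
    exact Set.Finite.biUnion ts.finite_toSet ih

noncomputable def Term.size : Term V Fn → ℕ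
  | .var _ => 1
  | .app _ ts => 1 + (ts.attach.map (fun t => Term.size t.1)).sum
  decreasing_by have := List.sizeOf_lt_of_mem t.2; simp at *; omega

@[simp] lemma Term.size_var (v : V) : (Term.var v : Term V Fn).size = 1 := by rw [Term.size]

lemma Term.size_app (f : Fn) (ts : List (Term V Fn)) :
    (Term.app f ts).size = 1 + (ts.map Term.size).sum := by
  rw [Term.size]; congr 1; simp

lemma Term.size_pos (t : Term V Fn) : 0 < t.size := by
  cases t with
  | var v => simp
  | app f ts => rw [Term.size_app]; omega

lemma Term.size_le_subst {x : V} {t : Term V Fn} (σ : Subst V Fn) (hx : x ∈ t.vars) :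
    (σ x).size ≤ (t.subst σ).size ∧ (t ≠ .var x → (σ x).size < (t.subst σ).size) := by
  induction t using Term.ind' with
  | hv v =>
    simp at hx; subst hx
    simp
  | ha f ts ih =>
    rw [Term.vars_app] at hx
    obtain ⟨u, hu, hxu⟩ := hx
    have h1 : (σ x).size ≤ (u.subst σ).size := (ih u hu hxu).1
    have h2 : (u.subst σ).size + 1 ≤ ((Term.app f ts).subst σ).size := by
      rw [Term.subst_app, Term.size_app]
      have : (u.subst σ).size ∈ (ts.map (Term.subst σ)).map Term.size := by
        simp only [List.map_map]
        exact List.mem_map.2 ⟨u, hu, rfl⟩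
      have := List.single_le_sum (by intro y _; omega) _ this
      omega
    constructor
    · omega
    · intro _; omega

lemma Term.vars_subst_subset (σ : Subst V Fn) (t : Term V Fn) :
    (t.subst σ).vars ⊆ {x | ∃ v ∈ t.vars, x ∈ (σ v).vars} := by
  induction t using Term.ind' with
  | hv v => intro x hx; exact ⟨v, by simp, by simpa using hx⟩
  | ha f ts ih =>
    intro x hx
    rw [Term.subst_app, Term.vars_app] at hx
    obtain ⟨u', hu', hx⟩ := hx
    obtain ⟨u, hu, rfl⟩ := List.mem_map.1 hu'
    obtain ⟨v, hv, hxv⟩ := ih u hu hx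
    exact ⟨v, by rw [Term.vars_app]; exact ⟨u, hu, hv⟩, hxv⟩
end
section
variable {V Fn : Type}

def UnifiesP (σ : Subst V Fn) (E : List (Term V Fn × Term V Fn)) : Prop :=
  ∀ p ∈ E, p.1.subst σ = p.2.subst σ

def EVars (E : List (Term V Fn × Term V Fn)) : Set V :=
  {x | ∃ p ∈ E, x ∈ p.1.vars ∪ p.2.vars}

noncomputable def ESize (E : List (Term V Fn × Term V Fn)) : ℕ :=
  (E.map fun p => p.1.size + p.2.size).sum

def IsMGUP (σ : Subst V Fn) (E : List (Term V Fn × Term V Fn)) : Prop :=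
  UnifiesP σ E ∧ ∀ τ, UnifiesP τ E → ∃ γ, σ.comp γ = τ

lemma EVars_finite (E : List (Term V Fn × Term V Fn)) : (EVars E).Finite := by
  induction E with
  | nil => convert Set.finite_empty; ext x; simp [EVars]
  | cons p E ih =>
    have : EVars (p :: E) = (p.1.vars ∪ p.2.vars) ∪ EVars E := by
      ext x; simp [EVars]
    rw [this]
    exact (((p.1.vars_finite).union (p.2.vars_finite)).union ih)

lemma EVars_cons (p : Term V Fn × Term V Fn) (E : List (Term V Fn × Term V Fn)) :
    EVars (p :: E) = (p.1.vars ∪ p.2.vars) ∪ EVars E := by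
  ext x; simp [EVars]

lemma EVars_mono {E E' : List (Term V Fn × Term V Fn)} (h : ∀ p ∈ E', p ∈ E) :
    EVars E' ⊆ EVars E := by
  intro x hx; obtain ⟨p, hp, hxp⟩ := hx; exact ⟨p, h p hp, hxp⟩

lemma ESize_cons (p : Term V Fn × Term V Fn) (E : List (Term V Fn × Term V Fn)) :
    ESize (p :: E) = p.1.size + p.2.size + ESize E := by
  simp [ESize]

/-- swap of the head pair preserves unifiers -/
lemma unifiesP_swap_head {σ : Subst V Fn} {s t : Term V Fn} {E : List (Term V Fn × Term V Fn)} :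
    UnifiesP σ ((s, t) :: E) ↔ UnifiesP σ ((t, s) :: E) := by
  constructor <;> intro h p hp
  · rcases List.mem_cons.1 hp with h1 | h1
    · subst h1; exact (h (s, t) (by simp)).symm
    · exact h p (by simp [h1])
  · rcases List.mem_cons.1 hp with h1 | h1
    · subst h1; exact (h (t, s) (by simp)).symm
    · exact h p (by simp [h1])

lemma var_elim_aux (x : V) (t : Term V Fn) (E' : List (Term V Fn × Term V Fn))
    (hxt : x ∉ t.vars)
    (IH : ∀ E₀ : List (Term V Fn × Term V Fn),
      (EVars E₀).ncard < (EVars ((Term.var x, t) :: E')).ncard →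
      (∃ θ, UnifiesP θ E₀) → ∃ σ, IsMGUP σ E₀)
    (hex : ∃ θ, UnifiesP θ ((Term.var x, t) :: E')) :
    ∃ σ, IsMGUP σ ((Term.var x, t) :: E') := by
  classical
  set E : List (Term V Fn × Term V Fn) := (Term.var x, t) :: E' with hE
  set σ₀ : Subst V Fn := fun v => if v = x then t else .var v with hσ₀
  have hσ₀x : σ₀ x = t := by simp [hσ₀]
  have key : ∀ τ : Subst V Fn, UnifiesP τ E → σ₀.comp τ = τ := by
    intro τ hτ
    funext v
    by_cases hv : v = x
    · subst hv
      have := hτ (Term.var v, t) (by simp [hE])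
      simp at this
      simp [Subst.comp, hσ₀, this]
    · simp [Subst.comp, hσ₀, hv]
  have ht0 : t.subst σ₀ = t := by
    have : t.subst σ₀ = t.subst Term.var := by
      apply Term.subst_congr
      intro v hv
      have : v ≠ x := fun h => hxt (h ▸ hv)
      simp [hσ₀, this]
    simpa using this
  set E'' := E'.map (fun p => (p.1.subst σ₀, p.2.subst σ₀)) with hE''
  have hunif'' : ∀ τ : Subst V Fn, UnifiesP τ E → UnifiesP τ E'' := by
    intro τ hτ p hp
    obtain ⟨q, hq, rfl⟩ := List.mem_map.1 hp
    simp only [Term.subst_subst, key τ hτ]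
    exact hτ q (by simp [hE, hq])
  -- measure decrease
  have hsub : EVars E'' ⊆ EVars E \ {x} := by
    intro y hy
    obtain ⟨p, hp, hyp⟩ := hy
    obtain ⟨q, hq, rfl⟩ := List.mem_map.1 hp
    have hcomp : ∀ u : Term V Fn, u ∈ [q.1, q.2] → y ∈ (u.subst σ₀).vars →
        y ∈ EVars E \ {x} := by
      intro u hu hyu
      have := Term.vars_subst_subset σ₀ u hyu
      obtain ⟨v, hv, hyv⟩ := this
      by_cases hvx : v = x
      · rw [hvx, hσ₀x] at hyv
        refine ⟨⟨(Term.var x, t), by simp [hE], by simp [hyv]⟩, ?_⟩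
        simp only [Set.mem_singleton_iff]
        intro h; exact hxt (h ▸ hyv)
      · simp [hσ₀, hvx] at hyv
        subst hyv
        refine ⟨⟨q, by simp [hE, hq], ?_⟩, by simp [hvx]⟩
        simp at hu
        rcases hu with h | h <;> subst h <;> simp [hv]
    simp only [Set.mem_union] at hyp
    rcases hyp with h | h
    · exact hcomp q.1 (by simp) h
    · exact hcomp q.2 (by simp) h
  have hxE : x ∈ EVars E := ⟨(Term.var x, t), by simp [hE], by simp⟩
  have hlt : (EVars E'').ncard < (EVars E).ncard := by
    have hfin := EVars_finite (Fn := Fn) E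
    calc (EVars E'').ncard ≤ (EVars E \ {x}).ncard :=
          Set.ncard_le_ncard hsub (hfin.subset Set.diff_subset)
      _ < (EVars E).ncard := by
          rw [Set.ncard_diff_singleton_of_mem hxE]
          have : 0 < (EVars E).ncard := Set.ncard_pos hfin |>.2 ⟨x, hxE⟩
          omega
  obtain ⟨θ, hθ⟩ := hex
  obtain ⟨σ', hσ'u, hσ'm⟩ := IH E'' hlt ⟨θ, hunif'' θ hθ⟩
  refine ⟨σ₀.comp σ', ?_, ?_⟩
  · intro p hp
    rcases List.mem_cons.1 hp with h1 | h1
    · subst h1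
      show (Term.var x).subst (σ₀.comp σ') = t.subst (σ₀.comp σ')
      rw [← Term.subst_subst, ← Term.subst_subst]
      simp [hσ₀x, ht0]
    · rw [← Term.subst_subst, ← Term.subst_subst]
      exact hσ'u (p.1.subst σ₀, p.2.subst σ₀) (List.mem_map.2 ⟨p, h1, rfl⟩)
  · intro τ hτ
    obtain ⟨γ, hγ⟩ := hσ'm τ (hunif'' τ hτ)
    exact ⟨γ, by rw [Subst.comp_assoc, hγ, key τ hτ]⟩

end
section
variable {V Fn : Type}

lemma zip_of_map_eq {α β : Type*} {f : α → β} : ∀ {l₁ l₂ : List α},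
    l₁.map f = l₂.map f → ∀ p ∈ l₁.zip l₂, f p.1 = f p.2
  | [], [], _, p, hp => by simp at hp
  | [], b :: l₂, h, p, hp => by simp at h
  | a :: l₁, [], h, p, hp => by simp at h
  | a :: l₁, b :: l₂, h, p, hp => by
    simp only [List.map_cons, List.cons.injEq] at h
    rcases List.mem_cons.1 hp with h1 | h1
    · subst h1; exact h.1
    · exact zip_of_map_eq h.2 p h1

lemma map_eq_of_zip {α β : Type*} {f : α → β} : ∀ {l₁ l₂ : List α},
    l₁.length = l₂.length → (∀ p ∈ l₁.zip l₂, f p.1 = f p.2) → l₁.map f = l₂.map f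
  | [], [], _, _ => rfl
  | [], b :: l₂, h, _ => by simp at h
  | a :: l₁, [], h, _ => by simp at h
  | a :: l₁, b :: l₂, h, hp => by
    simp only [List.map_cons]
    refine congrArg₂ _ (hp (a, b) (by simp)) ?_
    exact map_eq_of_zip (by simpa using h) (fun p hq => hp p (by simp [hq]))

lemma zip_size_le : ∀ (l₁ l₂ : List (Term V Fn)),
    (((l₁.zip l₂).map fun p => p.1.size + p.2.size).sum : ℕ) ≤
      (l₁.map Term.size).sum + (l₂.map Term.size).sum
  | [], l₂ => by simp
  | a :: l₁, [] => by simp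
  | a :: l₁, b :: l₂ => by
    simp only [List.zip_cons_cons, List.map_cons, List.sum_cons]
    have := zip_size_le l₁ l₂
    omega

lemma ESize_append (E₁ E₂ : List (Term V Fn × Term V Fn)) :
    ESize (E₁ ++ E₂) = ESize E₁ + ESize E₂ := by
  simp [ESize]

lemma EVars_zip_append_subset {f : Fn} {g : Fn} (ss ts : List (Term V Fn))
    (E' : List (Term V Fn × Term V Fn)) :
    EVars (ss.zip ts ++ E') ⊆ EVars ((Term.app f ss, Term.app g ts) :: E') := by
  intro y hy
  obtain ⟨p, hp, hyp⟩ := hy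
  rcases List.mem_append.1 hp with h | h
  · obtain ⟨h1, h2⟩ := List.of_mem_zip h
    refine ⟨(Term.app f ss, Term.app g ts), by simp, ?_⟩
    simp only [Set.mem_union] at hyp ⊢
    rcases hyp with h3 | h3
    · left; rw [Term.vars_app]; exact ⟨p.1, h1, h3⟩
    · right; rw [Term.vars_app]; exact ⟨p.2, h2, h3⟩
  · exact ⟨p, by simp [h], hyp⟩

end
section
variable {V Fn : Type}

lemma unifiesP_of_tail {σ : Subst V Fn} {p} {E : List (Term V Fn × Term V Fn)}
    (h : UnifiesP σ (p :: E)) : UnifiesP σ E := fun q hq => h q (by simp [hq])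

theorem unify_rec : ∀ (n m : ℕ) (E : List (Term V Fn × Term V Fn)),
    (EVars E).ncard ≤ n → ESize E ≤ m → (∃ θ, UnifiesP θ E) → ∃ σ, IsMGUP σ E := by
  intro n
  induction n with
  | zero =>
    intro m E hn _ hex
    obtain ⟨θ, hθ⟩ := hex
    have hemp : EVars E = ∅ := by
      have := EVars_finite (Fn := Fn) E
      rw [← Set.ncard_eq_zero this] at *
      omega
    have hground : ∀ (u : Term V Fn), (∃ p ∈ E, u = p.1 ∨ u = p.2) →
        ∀ τ : Subst V Fn, u.subst τ = u := by
      intro u hu τ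
      obtain ⟨p, hp, hcase⟩ := hu
      have hv : ∀ v ∈ u.vars, τ v = Term.var v := by
        intro v hv
        exfalso
        have : v ∈ EVars E := by
          refine ⟨p, hp, ?_⟩
          simp only [Set.mem_union]
          rcases hcase with h | h <;> subst h <;> [left; right] <;> exact hv
        rw [hemp] at this; exact this
      calc u.subst τ = u.subst Term.var := Term.subst_congr hv
        _ = u := Term.subst_id u
    refine ⟨Term.var, ?_, fun τ _ => ⟨τ, by funext v; simp [Subst.comp]⟩⟩
    intro p hp
    rw [hground p.1 ⟨p, hp, Or.inl rfl⟩ Term.var, hground p.2 ⟨p, hp, Or.inr rfl⟩ Term.var]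
    have h1 := hground p.1 ⟨p, hp, Or.inl rfl⟩ θ
    have h2 := hground p.2 ⟨p, hp, Or.inr rfl⟩ θ
    rw [← h1, ← h2]
    exact hθ p hp
  | succ n ihn =>
    intro m
    induction m with
    | zero =>
      intro E hn hm hex
      match E with
      | [] => exact ⟨Term.var, fun p hp => by simp at hp,
               fun τ _ => ⟨τ, by funext v; simp [Subst.comp]⟩⟩
      | p :: E' =>
        exfalso
        rw [ESize_cons] at hm
        have := p.1.size_pos
        omega
    | succ m ihm =>
      intro E hn hm hex
      match E with
      | [] => exact ⟨Term.var, fun p hp => by simp at hp,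
               fun τ _ => ⟨τ, by funext v; simp [Subst.comp]⟩⟩
      | (s, t) :: E' =>
        obtain ⟨θ, hθ⟩ := hex
        -- helper for the two var cases
        have hvarcase : ∀ (x : V) (u : Term V Fn),
            EVars ((Term.var x, u) :: E') = EVars ((s, t) :: E') →
            (∃ θ', UnifiesP θ' ((Term.var x, u) :: E')) →
            x ∉ u.vars →
            ∃ σ, IsMGUP σ ((Term.var x, u) :: E') := by
          intro x u hEeq hex' hxu
          refine var_elim_aux x u E' hxu ?_ hex'
          intro E₀ hlt hex₀
          refine ihn (ESize E₀) E₀ ?_ le_rfl hex₀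
          rw [hEeq] at hlt
          omega
        cases s with
        | var x =>
          by_cases htx : t = Term.var x
          · -- trivial pair, drop it
            subst htx
            have hex' : ∃ θ', UnifiesP θ' E' := ⟨θ, unifiesP_of_tail hθ⟩
            obtain ⟨σ, hσu, hσm⟩ := ihm E'
              (le_trans (Set.ncard_le_ncard (EVars_mono (by intro p hp; simp [hp]))
                (EVars_finite _)) hn)
              (by rw [ESize_cons] at hm; simp at hm; omega) hex'
            refine ⟨σ, ?_, fun τ hτ => hσm τ (unifiesP_of_tail hτ)⟩
            intro p hp
            rcases List.mem_cons.1 hp with h1 | h1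
            · subst h1; rfl
            · exact hσu p h1
          · by_cases hxt : x ∈ t.vars
            · -- occurs check: no unifier, contradiction
              exfalso
              have h1 := hθ (Term.var x, t) (by simp)
              simp only [Term.subst_var] at h1
              have h2 := (Term.size_le_subst θ hxt).2 htx
              rw [← h1] at h2
              omega
            · exact hvarcase x t rfl ⟨θ, hθ⟩ hxt
        | app f ss =>
          cases t with
          | var x =>
            by_cases hxs : x ∈ (Term.app f ss).vars
            · exfalso
              have h1 := hθ (Term.app f ss, Term.var x) (by simp)
              simp only [Term.subst_var] at h1
              have h2 := (Term.size_le_subst θ hxs).2 (by simp)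
              rw [h1] at h2
              omega
            · have hEeq : EVars ((Term.var x, Term.app f ss) :: E')
                  = EVars ((Term.app f ss, Term.var x) :: E') := by
                rw [EVars_cons, EVars_cons]
                simp [Set.union_comm]
              obtain ⟨σ, hσu, hσm⟩ := hvarcase x (Term.app f ss) hEeq
                ⟨θ, unifiesP_swap_head.1 hθ⟩ hxs
              exact ⟨σ, unifiesP_swap_head.1 hσu,
                fun τ hτ => hσm τ (unifiesP_swap_head.1 hτ)⟩
          | app g ts =>
            have hhead := hθ (Term.app f ss, Term.app g ts) (by simp)
            simp only [Term.subst_app, Term.app.injEq] at hhead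
            obtain ⟨hfg, hmapθ⟩ := hhead
            have hlen : ss.length = ts.length := by
              have := congrArg List.length hmapθ
              simpa using this
            subst hfg
            set E'' := ss.zip ts ++ E' with hE''
            have hto : ∀ τ : Subst V Fn, UnifiesP τ ((Term.app f ss, Term.app f ts) :: E') →
                UnifiesP τ E'' := by
              intro τ hτ p hp
              rcases List.mem_append.1 hp with h | h
              · have hh := hτ (Term.app f ss, Term.app f ts) (by simp)
                simp only [Term.subst_app, Term.app.injEq, true_and] at hh
                exact zip_of_map_eq hh p h
              · exact hτ p (by simp [h])
            have hfrom : ∀ τ : Subst V Fn, UnifiesP τ E'' →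
                UnifiesP τ ((Term.app f ss, Term.app f ts) :: E') := by
              intro τ hτ p hp
              rcases List.mem_cons.1 hp with h1 | h1
              · subst h1
                simp only [Term.subst_app]
                congr 1
                exact map_eq_of_zip hlen (fun q hq => hτ q (by simp [hE'', hq]))
              · exact hτ p (by simp [hE'', h1])
            have hcard'' : (EVars E'').ncard ≤ n + 1 :=
              le_trans (Set.ncard_le_ncard (EVars_zip_append_subset ss ts E')
                (EVars_finite _)) hn
            have hsize'' : ESize E'' ≤ m := by
              rw [hE'', ESize_append, ESize_cons] at *
              have h1 := zip_size_le ss ts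
              have h2 : (Term.app f ss).size = 1 + (ss.map Term.size).sum :=
                Term.size_app f ss
              have h3 : (Term.app f ts).size = 1 + (ts.map Term.size).sum :=
                Term.size_app f ts
              simp only [ESize] at *
              omega
            obtain ⟨σ, hσu, hσm⟩ := ihm E'' hcard'' hsize'' ⟨θ, hto θ hθ⟩
            exact ⟨σ, hfrom σ hσu, fun τ hτ => hσm τ (hto τ hτ)⟩

theorem exists_mgup (E : List (Term V Fn × Term V Fn)) (hex : ∃ θ, UnifiesP θ E) :
    ∃ σ, IsMGUP σ E :=
  unify_rec (EVars E).ncard (ESize E) E le_rfl le_rfl hex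

end
section
variable {V Fn P : Type}

lemma Lit.subst_eq_iff {σ : Subst V Fn} {l l' : Lit V Fn P} :
    l.subst σ = l'.subst σ ↔
      (l.pol = l'.pol ∧ l.atom.pred = l'.atom.pred ∧
        l.atom.args.map (Term.subst σ) = l'.atom.args.map (Term.subst σ)) := by
  simp [Lit.subst, Atom.subst, Lit.mk.injEq, Atom.mk.injEq]

theorem exists_isMGU (ls : List (Lit V Fn P)) (θ : Subst V Fn) (hθ : IsUnifier θ ls) :
    ∃ σ, IsMGU σ ls := by
  match ls with
  | [] =>
    exact ⟨Term.var, fun l₁ h₁ => by simp at h₁,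
      fun τ _ => ⟨τ, by funext v; simp [Subst.comp]⟩⟩
  | l :: rest =>
    have hstat : ∀ l' ∈ rest, l.pol = l'.pol ∧ l.atom.pred = l'.atom.pred ∧
        l.atom.args.length = l'.atom.args.length := by
      intro l' hl'
      have := Lit.subst_eq_iff.1 (hθ l (by simp) l' (by simp [hl']))
      refine ⟨this.1, this.2.1, ?_⟩
      have := congrArg List.length this.2.2
      simpa using this
    set E := rest.flatMap (fun l' => l.atom.args.zip l'.atom.args) with hE
    have equiv : ∀ σ : Subst V Fn, IsUnifier σ (l :: rest) ↔ UnifiesP σ E := by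
      intro σ
      constructor
      · intro hσ p hp
        rw [hE, List.mem_flatMap] at hp
        obtain ⟨l', hl', hpz⟩ := hp
        have := (Lit.subst_eq_iff.1 (hσ l (by simp) l' (by simp [hl']))).2.2
        exact zip_of_map_eq this p hpz
      · intro hσ
        have hl : ∀ l' ∈ rest, l.subst σ = l'.subst σ := by
          intro l' hl'
          obtain ⟨h1, h2, h3⟩ := hstat l' hl'
          rw [Lit.subst_eq_iff]
          refine ⟨h1, h2, map_eq_of_zip h3 ?_⟩
          intro p hp
          exact hσ p (by rw [hE, List.mem_flatMap]; exact ⟨l', hl', hp⟩)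
        intro l₁ h₁ l₂ h₂
        have e₁ : l₁.subst σ = l.subst σ := by
          rcases List.mem_cons.1 h₁ with h | h
          · rw [h]
          · exact (hl l₁ h).symm
        have e₂ : l₂.subst σ = l.subst σ := by
          rcases List.mem_cons.1 h₂ with h | h
          · rw [h]
          · exact (hl l₂ h).symm
        rw [e₁, e₂]
    obtain ⟨σ, hσu, hσm⟩ := exists_mgup E ⟨θ, (equiv θ).1 hθ⟩
    exact ⟨σ, (equiv σ).2 hσu, fun τ hτ => hσm τ ((equiv τ).1 hτ)⟩

end
section
variable {V Fn P : Type}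

lemma Lit.subst_subst (σ δ : Subst V Fn) (l : Lit V Fn P) :
    (l.subst σ).subst δ = l.subst (σ.comp δ) := by
  simp [Lit.subst, Atom.subst, List.map_map, Function.comp, Term.subst_subst]

lemma Clause.subst_subst (σ δ : Subst V Fn) (C : Clause V Fn P) :
    (C.subst σ).subst δ = C.subst (σ.comp δ) := by
  simp only [Clause.subst, Multiset.map_map]
  exact Multiset.map_congr rfl (fun l _ => Lit.subst_subst σ δ l)

@[simp] lemma Clause.subst_cons (σ : Subst V Fn) (l : Lit V Fn P) (C : Clause V Fn P) :
    Clause.subst σ (l ::ₘ C) = l.subst σ ::ₘ C.subst σ := Multiset.map_cons _ _ _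

@[simp] lemma Clause.subst_add (σ : Subst V Fn) (C D : Clause V Fn P) :
    Clause.subst σ (C + D) = C.subst σ + D.subst σ := Multiset.map_add _ _ _

lemma Lit.vars_subset_clause {l : Lit V Fn P} {C : Clause V Fn P} (h : l ∈ C) :
    l.vars ⊆ C.vars := fun x hx => ⟨l, h, hx⟩

lemma Lit.subst_congr {σ τ : Subst V Fn} {l : Lit V Fn P}
    (h : ∀ v ∈ l.vars, σ v = τ v) : l.subst σ = l.subst τ := by
  simp only [Lit.subst, Atom.subst, Lit.mk.injEq, Atom.mk.injEq, true_and, and_self]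
  exact List.map_congr_left fun t ht => Term.subst_congr fun v hv => h v ⟨t, ht, hv⟩

lemma Clause.subst_congr {σ τ : Subst V Fn} {C : Clause V Fn P}
    (h : ∀ v ∈ C.vars, σ v = τ v) : C.subst σ = C.subst τ :=
  Multiset.map_congr rfl fun l hl =>
    Lit.subst_congr fun v hv => h v (Lit.vars_subset_clause hl hv)

lemma Clause.ValidEF.subst {C : Clause V Fn P} (h : C.ValidEF) (σ : Subst V Fn) :
    (C.subst σ).ValidEF := by
  obtain ⟨A, h1, h2⟩ := h
  exact ⟨A.subst σ, Multiset.mem_map_of_mem _ h1, Multiset.mem_map_of_mem _ h2⟩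

lemma Clause.ValidEF.satC {C : Clause V Fn P} (h : C.ValidEF) (α : PAssign V Fn P) :
    satC α C := by
  obtain ⟨A, h1, h2⟩ := h
  cases hb : α A with
  | true => exact ⟨⟨true, A⟩, h1, by simp [litTrue, hb]⟩
  | false => exact ⟨⟨false, A⟩, h2, by simp [litTrue, hb]⟩

lemma Term.eval_subst (I : Interp Fn P) (ρ : V → I.dom) (σ : Subst V Fn) (t : Term V Fn) :
    Term.eval I ρ (t.subst σ) = Term.eval I (fun v => Term.eval I ρ (σ v)) t := by
  induction t using Term.ind' with
  | hv v => simp [Term.eval]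
  | ha f ts ih =>
    rw [Term.subst_app, Term.eval, Term.eval]
    congr 1
    simp only [List.map_map, List.attach_map_f]
    exact List.map_congr_left fun u hu => ih u hu


end
section
variable {V Fn P : Type}

lemma sat_to_passign {F₀ : Set (Clause V Fn P)} (h : SatEF F₀) :
    ∃ α : PAssign V Fn P, ∀ D ∈ F₀, ∀ θ : Subst V Fn, satC α (Clause.subst θ D) := by
  classical
  obtain ⟨I, hI⟩ := h
  obtain ⟨d₀⟩ := I.nonempty
  set ρ₀ : V → I.dom := fun _ => d₀ with hρ₀
  refine ⟨fun A => decide (I.pr A.pred (A.args.map (Term.eval I ρ₀))), ?_⟩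
  intro D hD θ
  obtain ⟨l, hl, hlh⟩ := hI D hD (fun v => Term.eval I ρ₀ (θ v))
  refine ⟨l.subst θ, Multiset.mem_map_of_mem _ hl, ?_⟩
  show decide (I.pr (l.subst θ).atom.pred ((l.subst θ).atom.args.map (Term.eval I ρ₀)))
      = (l.subst θ).pol
  have hxt2 : (l.subst θ).atom.args.map (Term.eval I ρ₀)
      = l.atom.args.map (Term.eval I (fun v => Term.eval I ρ₀ (θ v))) := by
    show (l.atom.args.map (Term.subst θ)).map (Term.eval I ρ₀) = _
    rw [List.map_map]
    exact List.map_congr_left fun t _ => Term.eval_subst I ρ₀ θ t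
  rw [hxt2]
  show decide (I.pr l.atom.pred _) = l.pol
  unfold litHolds at hlh
  rcases hp : l.pol with _ | _
  · rw [hp] at hlh
    simp only [decide_eq_false_iff_not]
    intro hpr
    exact absurd (hlh.2 hpr) (by simp)
  · rw [hp] at hlh
    simp only [decide_eq_true_eq]
    exact hlh.1 rfl

lemma passign_to_sat (F₀ : Set (Clause V Fn P)) (α : PAssign V Fn P)
    (h : ∀ D ∈ F₀, ∀ θ : Subst V Fn, satC α (Clause.subst θ D)) : SatEF F₀ := by
  classical
  by_cases hne : Nonempty (Term V Fn)
  · refine ⟨⟨Term V Fn, hne, fun f ts => Term.app f ts, fun p ts => α ⟨p, ts⟩ = true⟩, ?_⟩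
    set I : Interp Fn P := ⟨Term V Fn, hne, fun f ts => Term.app f ts,
      fun p ts => α ⟨p, ts⟩ = true⟩ with hI
    have heval : ∀ (ρ : V → Term V Fn) (t : Term V Fn), Term.eval I ρ t = t.subst ρ := by
      intro ρ t
      induction t using Term.ind' with
      | hv v => rw [Term.eval, Term.subst_var]
      | ha f ts ih =>
        rw [Term.eval, Term.subst_app]
        show Term.app f _ = Term.app f _
        congr 1
        rw [List.attach_map_f ts (Term.eval I ρ)]
        exact List.map_congr_left ih
    intro D hD ρ
    obtain ⟨l', hl', hlt⟩ := h D hD ρ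
    obtain ⟨l, hl, rfl⟩ := Multiset.mem_map.1 hl'
    refine ⟨l, hl, ?_⟩
    show l.pol = true ↔ I.pr l.atom.pred (l.atom.args.map (Term.eval I ρ))
    have hm : l.atom.args.map (Term.eval I ρ) = l.atom.args.map (Term.subst ρ) :=
      List.map_congr_left fun t _ => heval ρ t
    rw [hm]
    show l.pol = true ↔ α ⟨l.atom.pred, l.atom.args.map (Term.subst ρ)⟩ = true
    have : α ⟨l.atom.pred, l.atom.args.map (Term.subst ρ)⟩ = l.pol := hlt
    rw [this]
  · have hVempty : IsEmpty V := ⟨fun v => hne ⟨Term.var v⟩⟩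
    have hTempty : IsEmpty (Term V Fn) := ⟨fun t => hne ⟨t⟩⟩
    refine ⟨⟨PUnit, ⟨.unit⟩, fun _ _ => .unit, fun p _ => α ⟨p, []⟩ = true⟩, ?_⟩
    intro D hD ρ
    obtain ⟨l', hl', hlt⟩ := h D hD (fun v => (hVempty.false v).elim)
    obtain ⟨l, hl, rfl⟩ := Multiset.mem_map.1 hl'
    refine ⟨l, hl, ?_⟩
    have hargs : l.atom.args = [] := by
      cases harg : l.atom.args with
      | nil => rfl
      | cons a _ => exact (hTempty.false a).elim
    show l.pol = true ↔ α ⟨l.atom.pred, []⟩ = true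
    have : α ⟨l.atom.pred, []⟩ = l.pol := by
      have h2 : (l.subst (fun v => (hVempty.false v).elim)).atom = ⟨l.atom.pred, []⟩ := by
        show (⟨l.atom.pred, l.atom.args.map _⟩ : Atom V Fn P) = _
        rw [hargs]
        rfl
      rw [← h2]
      exact hlt
    rw [this]

end
section
variable {V Fn P : Type}

lemma flip_blocked {F : Set (Clause V Fn P)} {L : Lit V Fn P} {C' : Clause V Fn P}
    (hdisj : (F ∪ {L ::ₘ C'}).Pairwise fun D₁ D₂ => Clause.vars D₁ ∩ Clause.vars D₂ = ∅)
    (hbl : BlockedEF L C' F)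
    (α : PAssign V Fn P)
    (hα : ∀ D ∈ F, D ≠ L ::ₘ C' → ∀ γ : Subst V Fn, satC α (Clause.subst γ D)) :
    ∃ β : PAssign V Fn P,
      (∀ D ∈ F, D ≠ L ::ₘ C' → ∀ γ : Subst V Fn, satC β (Clause.subst γ D)) ∧
      (∀ θ : Subst V Fn, satC β (Clause.subst θ (L ::ₘ C'))) := by
  classical
  set C : Clause V Fn P := L ::ₘ C' with hC
  set βf : Set (Atom V Fn P) → PAssign V Fn P :=
    fun S A => if A ∈ S then L.pol else α A with hβf
  set Good : Set (Atom V Fn P) → Prop :=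
    fun S => ∀ D ∈ F, D ≠ C → ∀ γ : Subst V Fn, satC (βf S) (Clause.subst γ D) with hGood
  -- transfer of satisfaction along pointwise-equal assignments
  have htrans : ∀ (g g' : PAssign V Fn P) (X : Clause V Fn P),
      (∀ l ∈ X, g l.atom = g' l.atom) → satC g X → satC g' X := by
    intro g g' X hagree ⟨l, hl, hlt⟩
    exact ⟨l, hl, by unfold litTrue at hlt ⊢; rw [← hagree l hl]; exact hlt⟩
  have hgood0 : Good ∅ := by
    intro D hD hDC γ
    have := hα D hD hDC γ
    refine htrans α (βf ∅) _ (fun l _ => by simp [hβf]) this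
  -- Zorn
  obtain ⟨M, hMmax⟩ :
      ∃ M, Maximal (fun S : Set (Atom V Fn P) => Good S) M := by
    have := zorn_subset_nonempty {S | Good S} ?_ ∅ hgood0
    · obtain ⟨m, _, h2⟩ := this
      exact ⟨m, h2⟩
    intro c hcS hchain hcne
    refine ⟨⋃₀ c, ?_, fun s hs => Set.subset_sUnion_of_mem hs⟩
    intro D hD hDC γ
    -- cover lemma: a finite set of atoms inside ⋃₀ c lies in one member
    have hcover : ∀ T : Finset (Atom V Fn P), (∀ A ∈ T, ∃ S ∈ c, A ∈ S) →
        ∃ S₀ ∈ c, ∀ A ∈ T, A ∈ S₀ := by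
      intro T
      induction T using Finset.induction_on with
      | empty =>
        intro _
        obtain ⟨S, hS⟩ := hcne
        exact ⟨S, hS, by simp⟩
      | @insert A T hAT ih =>
        intro hT
        obtain ⟨S₀, hS₀c, hS₀⟩ := ih (fun A hA => hT A (Finset.mem_insert_of_mem hA))
        obtain ⟨S₁, hS₁c, hS₁⟩ := hT A (Finset.mem_insert_self A T)
        rcases eq_or_ne S₀ S₁ with h | h
        · exact ⟨S₁, hS₁c, fun B hB => by
            rcases Finset.mem_insert.1 hB with h2 | h2
            · exact h2 ▸ hS₁
            · exact h ▸ hS₀ B h2⟩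
        rcases hchain hS₀c hS₁c h with h2 | h2
        · exact ⟨S₁, hS₁c, fun B hB => by
            rcases Finset.mem_insert.1 hB with h3 | h3
            · exact h3 ▸ hS₁
            · exact h2 (hS₀ B h3)⟩
        · exact ⟨S₀, hS₀c, fun B hB => by
            rcases Finset.mem_insert.1 hB with h3 | h3
            · exact h3 ▸ hS₁ |> h2
            · exact hS₀ B h3⟩
    set X : Clause V Fn P := Clause.subst γ D with hX
    set T : Finset (Atom V Fn P) :=
      (X.map (fun l => l.atom)).toFinset.filter (fun A => A ∈ ⋃₀ c) with hT
    obtain ⟨S₀, hS₀c, hS₀⟩ := hcover T (by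
      intro A hA
      rw [hT, Finset.mem_filter] at hA
      exact hA.2)
    have hG := hcS hS₀c D hD hDC γ
    refine htrans (βf S₀) (βf (⋃₀ c)) X ?_ hG
    intro l hl
    by_cases hmem : l.atom ∈ ⋃₀ c
    · have : l.atom ∈ T := by
        rw [hT, Finset.mem_filter, Multiset.mem_toFinset]
        exact ⟨Multiset.mem_map_of_mem _ hl, hmem⟩
      have h1 := hS₀ _ this
      simp [hβf, h1, hmem]
    · have h1 : l.atom ∉ S₀ := fun h => hmem ⟨S₀, hS₀c, h⟩
      simp [hβf, h1, hmem]
  -- Maximal good set: the flipped assignment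
  have hMmem : Good M := hMmax.1
  refine ⟨βf M, hMmem, ?_⟩
  by_contra hcon
  push_neg at hcon
  obtain ⟨θh, hCfalse⟩ := hcon
  set A : Atom V Fn P := (L.subst θh).atom with hA
  have hAM : A ∉ M := by
    intro hAin
    refine hCfalse ⟨L.subst θh, ?_, ?_⟩
    · rw [hC, Clause.subst_cons]; exact Multiset.mem_cons_self _ _
    · show βf M (L.subst θh).atom = (L.subst θh).pol
      rw [← hA]
      simp [hβf, hAin, Lit.subst]
  set M' : Set (Atom V Fn P) := insert A M with hM'
  have hβA' : βf M' A = L.pol := by simp [hβf, hM']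
  have hβdiff : ∀ B, B ≠ A → βf M' B = βf M B := by
    intro B hB
    simp only [hβf, hM', Set.mem_insert_iff]
    rcases Classical.em (B ∈ M) with h | h <;> simp [h, hB]
  have hgoodM' : Good M' := by
    intro D hD hDC γ
    by_contra hfalse
    -- previously true literal
    obtain ⟨l₀', hl₀', hl₀t⟩ := hMmem D hD hDC γ
    obtain ⟨l₀, hl₀, rfl⟩ := Multiset.mem_map.1 hl₀'
    have hl₀f : ¬ litTrue (βf M') (l₀.subst γ) := fun h =>
      hfalse ⟨l₀.subst γ, Multiset.mem_map_of_mem _ hl₀, h⟩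
    have hl₀A : (l₀.subst γ).atom = A := by
      by_contra hne
      exact hl₀f (by unfold litTrue at hl₀t ⊢; rw [hβdiff _ hne]; exact hl₀t)
    have hl₀pol : l₀.pol = !L.pol := by
      have h1 : βf M' (l₀.subst γ).atom = L.pol := by rw [hl₀A]; exact hβA'
      have h2 : (l₀.subst γ).pol = l₀.pol := rfl
      unfold litTrue at hl₀f
      rw [h1, h2] at hl₀f
      cases hLp : L.pol <;> cases hlp : l₀.pol <;> simp_all
    -- the resolvable sub-multiset
    set NsP : Lit V Fn P → Prop :=
      fun N => N.pol = !L.pol ∧ (N.subst γ).atom = A with hNsP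
    set Ns : Clause V Fn P := D.filter NsP with hNs
    set Drest : Clause V Fn P := D.filter (fun N => ¬ NsP N) with hDrest
    have hsum : Ns + Drest = D := Multiset.filter_add_not _ _
    have hNs0 : Ns ≠ 0 := by
      intro h0
      have : l₀ ∈ Ns := Multiset.mem_filter.2 ⟨hl₀, hl₀pol, hl₀A⟩
      rw [h0] at this
      simp at this
    -- variable disjointness and the combined substitution
    have hCD : Clause.vars C ∩ Clause.vars D = ∅ := by
      refine hdisj (Set.mem_union_right _ rfl) (Set.mem_union_left _ hD) ?_
      exact fun h => hDC h.symm
    set θc : Subst V Fn := fun v => if v ∈ Clause.vars C then θh v else γ v with hθc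
    have hCsub : ∀ l : Lit V Fn P, l ∈ C → l.subst θc = l.subst θh := by
      intro l hl
      refine Lit.subst_congr fun v hv => ?_
      have : v ∈ Clause.vars C := Lit.vars_subset_clause hl hv
      simp [hθc, this]
    have hDsub : ∀ l : Lit V Fn P, l ∈ D → l.subst θc = l.subst γ := by
      intro l hl
      refine Lit.subst_congr fun v hv => ?_
      have hvD : v ∈ Clause.vars D := Lit.vars_subset_clause hl hv
      have hvC : v ∉ Clause.vars C := by
        intro h
        have : v ∈ Clause.vars C ∩ Clause.vars D := ⟨h, hvD⟩
        rw [hCD] at this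
        exact this
      simp [hθc, hvC]
    -- θc unifies L with the complements of Ns
    have hLθc : L.subst θc = ⟨L.pol, A⟩ := by
      rw [hCsub L (Multiset.mem_cons_self _ _)]
      rfl
    have hallunif : ∀ l₁ ∈ (L :: (Ns.map Lit.compl).toList), l₁.subst θc = ⟨L.pol, A⟩ := by
      intro l₁ h₁
      rcases List.mem_cons.1 h₁ with h | h
      · rw [h]; exact hLθc
      · rw [Multiset.mem_toList, Multiset.mem_map] at h
        obtain ⟨N, hN, rfl⟩ := h
        have hNmem : N ∈ D := Multiset.mem_of_mem_filter hN
        obtain ⟨hNpol, hNA⟩ := Multiset.mem_filter.1 hN |>.2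
        have hc : (N.compl).subst θc = (N.compl).subst γ := by
          refine Lit.subst_congr fun v hv => ?_
          have hvD : v ∈ Clause.vars D := Lit.vars_subset_clause hNmem hv
          have hvC : v ∉ Clause.vars C := by
            intro h
            have : v ∈ Clause.vars C ∩ Clause.vars D := ⟨h, hvD⟩
            rw [hCD] at this
            exact this
          simp [hθc, hvC]
        rw [hc]
        show (⟨!N.pol, (N.subst γ).atom⟩ : Lit V Fn P) = _
        rw [hNpol, hNA, Bool.not_not]
    have hunif : IsUnifier θc (L :: (Ns.map Lit.compl).toList) := by
      intro l₁ h₁ l₂ h₂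
      rw [hallunif l₁ h₁, hallunif l₂ h₂]
    obtain ⟨σ, hσ⟩ := exists_isMGU _ θc hunif
    have hvalid := hbl D hD hDC Ns Drest hsum hNs0 σ hσ
    obtain ⟨δ, hδ⟩ := hσ.2 θc hunif
    have hvalid2 : Clause.ValidEF (Clause.subst θh C' + Clause.subst γ Drest) := by
      have h1 := hvalid.subst δ
      rw [Clause.subst_add, Clause.subst_subst, Clause.subst_subst, hδ] at h1
      have h2 : Clause.subst θc C' = Clause.subst θh C' :=
        Multiset.map_congr rfl fun l hl => hCsub l (Multiset.mem_cons_of_mem hl)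
      have h3 : Clause.subst θc Drest = Clause.subst γ Drest :=
        Multiset.map_congr rfl fun l hl => hDsub l (Multiset.mem_of_mem_filter hl)
      rw [h2, h3] at h1
      exact h1
    obtain ⟨A₀, hpos, hneg⟩ := hvalid2
    -- the literal of the complementary pair that is true under βf M'
    set b : Bool := βf M' A₀ with hb
    have hmemb : (⟨b, A₀⟩ : Lit V Fn P) ∈ Clause.subst θh C' + Clause.subst γ Drest := by
      by_cases hbb : b = true
      · rw [hbb]; exact hpos
      · rw [Bool.not_eq_true] at hbb; rw [hbb]; exact hneg
    have htrue : litTrue (βf M') (⟨b, A₀⟩ : Lit V Fn P) := rfl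
    rcases Multiset.mem_add.1 hmemb with hmem1 | hmem1
    case inr =>
      -- in Drest: contradicts that D.subst γ is false under βf M'
      have : (⟨b, A₀⟩ : Lit V Fn P) ∈ Clause.subst γ D := by
        have hle : Clause.subst γ Drest ≤ Clause.subst γ D :=
          Multiset.map_le_map (Multiset.filter_le _ _)
        exact Multiset.mem_of_le hle hmem1
      exact hfalse ⟨_, this, htrue⟩
    case inl =>
      obtain ⟨l₁, hl₁, hl₁e⟩ := Multiset.mem_map.1 hmem1
      -- l₁ was false under βf M (C.subst θh is false), so A₀ = A and b = L.pol
      have hl₁f : ¬ litTrue (βf M) (l₁.subst θh) := by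
        intro h
        exact hCfalse ⟨l₁.subst θh, by
          rw [hC, Clause.subst_cons]
          exact Multiset.mem_cons_of_mem (Multiset.mem_map_of_mem _ hl₁), h⟩
      have hA₀ : A₀ = A := by
        by_contra hne
        refine hl₁f ?_
        unfold litTrue
        rw [hl₁e]
        show βf M A₀ = b
        rw [← hβdiff A₀ hne]
      have hbL : b = L.pol := by rw [hb, hA₀]; exact hβA'
      -- the complementary literal
      have hmemc : (⟨!L.pol, A⟩ : Lit V Fn P) ∈ Clause.subst θh C' + Clause.subst γ Drest := by
        rw [← hA₀]
        rcases hLp : L.pol with _ | _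
        · simp only [Bool.not_false]; exact hpos
        · simp only [Bool.not_true]; exact hneg
      rcases Multiset.mem_add.1 hmemc with hmem2 | hmem2
      · -- in C'.subst θh : then C.subst θh is valid, contradicting its falsity
        obtain ⟨l₂, hl₂, hl₂e⟩ := Multiset.mem_map.1 hmem2
        have hvalidC : Clause.ValidEF (Clause.subst θh C) := by
          have hmL : (⟨L.pol, A⟩ : Lit V Fn P) ∈ Clause.subst θh C := by
            rw [hC, Clause.subst_cons]
            have : L.subst θh = ⟨L.pol, A⟩ := rfl
            rw [← this]
            exact Multiset.mem_cons_self _ _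
          have hmL2 : (⟨!L.pol, A⟩ : Lit V Fn P) ∈ Clause.subst θh C := by
            rw [hC, Clause.subst_cons]
            rw [← hl₂e]
            exact Multiset.mem_cons_of_mem (Multiset.mem_map_of_mem _ hl₂)
          rcases hLp : L.pol with _ | _
          · rw [hLp] at hmL hmL2
            simp only [Bool.not_false] at hmL2
            exact ⟨A, hmL2, hmL⟩
          · rw [hLp] at hmL hmL2
            simp only [Bool.not_true] at hmL2
            exact ⟨A, hmL, hmL2⟩
        exact hCfalse (hvalidC.satC (βf M))
      · -- in Drest.subst γ : contradicts the definition of Ns/Drest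
        obtain ⟨N₁, hN₁, hN₁e⟩ := Multiset.mem_map.1 hmem2
        have hN₁pred : NsP N₁ := by
          constructor
          · have : (N₁.subst γ).pol = N₁.pol := rfl
            rw [hN₁e] at this
            exact this.symm
          · have : (N₁.subst γ).atom = A := by rw [hN₁e]
            exact this
        exact (Multiset.mem_filter.1 hN₁).2 hN₁pred
  -- maximality contradiction
  have : M' = M := by
    have h1 := hMmax.2 hgoodM' (Set.subset_insert A M)
    exact Set.Subset.antisymm h1 (Set.subset_insert A M)
  rw [hM'] at this
  exact hAM (this ▸ Set.mem_insert A M)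

end
/-- A blocked clause (without equality) is redundant: if `C = L ∨ C'` is blocked by `L` in
`F` (all clauses pairwise variable-disjoint), then `F \ {C}` and `F ∪ {C}` are
satisfiability equivalent. -/
theorem stmt7 {V Fn P : Type} (F : Set (Clause V Fn P)) (L : Lit V Fn P) (C' : Clause V Fn P)
    (hdisj : (F ∪ {L ::ₘ C'}).Pairwise fun D₁ D₂ => Clause.vars D₁ ∩ Clause.vars D₂ = ∅)
    (hbl : BlockedEF L C' F) :
    SatEF (F \ {L ::ₘ C'}) ↔ SatEF (F ∪ {L ::ₘ C'}) := by
  constructor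
  · intro hsat
    obtain ⟨α, hα⟩ := sat_to_passign hsat
    have hα' : ∀ D ∈ F, D ≠ L ::ₘ C' → ∀ γ : Subst V Fn, satC α (Clause.subst γ D) := by
      intro D hD hne γ
      exact hα D ⟨hD, by simpa using hne⟩ γ
    obtain ⟨β, hβ1, hβ2⟩ := flip_blocked hdisj hbl α hα'
    refine passign_to_sat _ β ?_
    intro D hD θ
    rcases hD with hD | hD
    · by_cases hDC : D = L ::ₘ C'
      · rw [hDC]; exact hβ2 θ
      · exact hβ1 D hD hDC θ
    · rw [Set.mem_singleton_iff] at hD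
      rw [hD]
      exact hβ2 θ
  · rintro ⟨I, hI⟩
    exact ⟨I, fun D hD ρ => hI D (Set.mem_union_left _ hD.1) ρ⟩
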